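/- Let P be a natural unit interval order with c_1 ≺_P c_2 ≺_P ⋯ ≺_P c_l, and suppose for some index i, c_i < a_1 < a_2 < ⋯ < a_m < c_{i+1} and the set {c_i, a_1, …, a_m, c_{i+1}} is a ladder in P. Then the words a_m ⋯ a_1 c_l ⋯ c_1 and c_l ⋯ c_1 a_m ⋯ a_1 are P-Knuth equivalent. -/

import Mathlib

/-- a and b are incomparable with respect to the strict relation P. -/
def Incomp (P : ℕ → ℕ → Prop) (a b : ℕ) : Prop :=
  a ≠ b ∧ ¬ P a b ∧ ¬ P b a

/-- P is a natural unit interval order on [1,n]. -/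
def NUIO (n : ℕ) (P : ℕ → ℕ → Prop) : Prop :=
  (∀ a, ¬ P a a) ∧
  (∀ a b c, P a b → P b c → P a c) ∧
  (∀ a b, P a b → a < b) ∧
  (∀ a b c, a ∈ Finset.Icc 1 n → b ∈ Finset.Icc 1 n → c ∈ Finset.Icc 1 n →
    b < c → P b c → Incomp P a b → Incomp P a c → b < a ∧ a < c)

/-- A single P-Knuth move on a triple of consecutive letters. -/
def KnuthTriple (P : ℕ → ℕ → Prop) (x y : ℕ × ℕ × ℕ) : Prop :=
  ∃ a b c : ℕ, a < b ∧ b < c ∧ P a c ∧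
    ((Incomp P a b ∧ Incomp P b c ∧
        ((x, y) = ((b, c, a), (c, a, b)) ∨ (x, y) = ((c, a, b), (b, c, a)))) ∨
     (P a b ∧ Incomp P b c ∧
        ((x, y) = ((b, c, a), (b, a, c)) ∨ (x, y) = ((b, a, c), (b, c, a)) ∨
         (x, y) = ((c, b, a), (c, a, b)) ∨ (x, y) = ((c, a, b), (c, b, a)))) ∨
     (Incomp P a b ∧ P b c ∧
        ((x, y) = ((b, c, a), (c, b, a)) ∨ (x, y) = ((c, b, a), (b, c, a)) ∨
         (x, y) = ((a, c, b), (c, a, b)) ∨ (x, y) = ((c, a, b), (a, c, b)))) ∨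
     (P a b ∧ P b c ∧
        ((x, y) = ((b, c, a), (b, a, c)) ∨ (x, y) = ((b, a, c), (b, c, a)) ∨
         (x, y) = ((a, c, b), (c, a, b)) ∨ (x, y) = ((c, a, b), (a, c, b)))))

/-- Two words (lists) are connected by a single P-Knuth move. -/
def KnuthMoveL (P : ℕ → ℕ → Prop) (w w2 : List ℕ) : Prop :=
  ∃ (l1 l2 : List ℕ) (x1 x2 x3 y1 y2 y3 : ℕ),
    w = l1 ++ [x1, x2, x3] ++ l2 ∧ w2 = l1 ++ [y1, y2, y3] ++ l2 ∧
    KnuthTriple P (x1, x2, x3) (y1, y2, y3)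

/-- The finite set A is a ladder in P: listing its elements in increasing order,
consecutive elements are P-incomparable and elements at distance at least 2 are
P-comparable (smaller ≺_P larger). -/
def IsLadderSet (P : ℕ → ℕ → Prop) (A : Finset ℕ) : Prop :=
  ∀ x ∈ A, ∀ y ∈ A, x < y →
    ((∀ z ∈ A, ¬ (x < z ∧ z < y)) → Incomp P x y) ∧
    ((∃ z ∈ A, x < z ∧ z < y) → P x y)

namespace St16
variable {P : ℕ → ℕ → Prop}

abbrev R (P : ℕ → ℕ → Prop) : List ℕ → List ℕ → Prop := Relation.EqvGen (KnuthMoveL P)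

lemma R.refl (w : List ℕ) : R P w w := Relation.EqvGen.refl w
lemma R.trans {u v w : List ℕ} (h1 : R P u v) (h2 : R P v w) : R P u w :=
  Relation.EqvGen.trans _ _ _ h1 h2

lemma moveLift {w w' : List ℕ} (p s : List ℕ) (h : KnuthMoveL P w w') :
    KnuthMoveL P (p ++ w ++ s) (p ++ w' ++ s) := by
  obtain ⟨l1, l2, x1, x2, x3, y1, y2, y3, h1, h2, h3⟩ := h
  exact ⟨p ++ l1, l2 ++ s, x1, x2, x3, y1, y2, y3, by simp [h1], by simp [h2], h3⟩

lemma R.lift {w w' : List ℕ} (p s : List ℕ) (h : R P w w') :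
    R P (p ++ w ++ s) (p ++ w' ++ s) := by
  induction h with
  | rel u v h => exact Relation.EqvGen.rel _ _ (moveLift p s h)
  | refl u => exact Relation.EqvGen.refl _
  | symm u v _ ih => exact Relation.EqvGen.symm _ _ ih
  | trans u v w _ _ ih1 ih2 => exact Relation.EqvGen.trans _ _ _ ih1 ih2

lemma R.seg {x1 x2 x3 y1 y2 y3 : ℕ} (p s : List ℕ)
    (h : KnuthTriple P (x1, x2, x3) (y1, y2, y3)) :
    R P (p ++ x1 :: x2 :: x3 :: s) (p ++ y1 :: y2 :: y3 :: s) :=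
  Relation.EqvGen.rel _ _ ⟨p, s, x1, x2, x3, y1, y2, y3, by simp, by simp, h⟩

/-- Context condition allowing a swap past `z`. -/
def Ctx (P : ℕ → ℕ → Prop) (u z : ℕ) : Prop :=
  (z < u ∧ Incomp P z u) ∨ (u < z ∧ (P u z ∨ Incomp P u z))

/-- type-1 jump -/
lemma t1 {a b c : ℕ} (h1 : a < b) (h2 : b < c) (hac : P a c)
    (hab : Incomp P a b) (hbc : Incomp P b c) :
    KnuthTriple P (b, c, a) (c, a, b) :=
  ⟨a, b, c, h1, h2, hac, Or.inl ⟨hab, hbc, Or.inl rfl⟩⟩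

/-- swap the letter `u` rightwards past `y`, with right-context `z`:
`(u, y, z) → (y, u, z)`. -/
lemma tR {u y z : ℕ} (huy : u < y) (hzy : z < y) (hPuy : P u y) (hPzy : P z y)
    (hc : Ctx P u z) : KnuthTriple P (u, y, z) (y, u, z) := by
  rcases hc with ⟨hzu, hinc⟩ | ⟨huz, hP | hinc⟩
  · -- sorted (z, u, y) : Incomp z u, P u y : type 3, (a,c,b) ↔ (c,a,b) gives? no:
    -- type 3 pairs: (b,c,a)=(u,y,z) ↔ (c,b,a)=(y,u,z)
    exact ⟨z, u, y, hzu, huy, hPzy, Or.inr <| Or.inr <| Or.inl ⟨hinc, hPuy, Or.inl rfl⟩⟩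
  · -- sorted (u, z, y), P u z, P z y : type 4, (a,c,b) ↔ (c,a,b)
    exact ⟨u, z, y, huz, hzy, hPuy, Or.inr <| Or.inr <| Or.inr ⟨hP, hPzy, Or.inr <| Or.inr <| Or.inl rfl⟩⟩
  · -- sorted (u, z, y), Incomp u z, P z y : type 3, (a,c,b) ↔ (c,a,b)
    exact ⟨u, z, y, huz, hzy, hPuy, Or.inr <| Or.inr <| Or.inl ⟨hinc, hPzy, Or.inr <| Or.inr <| Or.inl rfl⟩⟩

/-- swap the letter `v` leftwards past `y`, with left-context `w`:
`(w, y, v) → (w, v, y)`. -/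
lemma tL {v y w : ℕ} (h1 : v < y) (h2 : v < w) (hPy : P v y) (hPw : P v w)
    (hc : Ctx P w y) : KnuthTriple P (w, y, v) (w, v, y) := by
  rcases hc with ⟨hyw, hinc⟩ | ⟨hwy, hP | hinc⟩
  · -- sorted (v, y, w), P v y, Incomp y w : type 2, (c,b,a) ↔ (c,a,b)
    exact ⟨v, y, w, h1, hyw, hPw, Or.inr <| Or.inl ⟨hPy, hinc, Or.inr <| Or.inr <| Or.inl rfl⟩⟩
  · -- sorted (v, w, y), P v w, P w y : type 4, (b,c,a) ↔ (b,a,c)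
    exact ⟨v, w, y, h2, hwy, hPy, Or.inr <| Or.inr <| Or.inr ⟨hPw, hP, Or.inl rfl⟩⟩
  · -- sorted (v, w, y), P v w, Incomp w y : type 2, (b,c,a) ↔ (b,a,c)
    exact ⟨v, w, y, h2, hwy, hPy, Or.inr <| Or.inl ⟨hPw, hinc, Or.inl rfl⟩⟩

end St16

namespace St16
variable {P : ℕ → ℕ → Prop}

open List in
/-- the letter `u` crosses rightwards over the decreasing chain `cs`,
stopping just before `z`. -/
lemma crossR : ∀ (cs : List ℕ) (u z : ℕ) (rest : List ℕ),
    List.Chain' (fun p q => q < p ∧ P q p) (cs ++ [z]) →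
    (∀ y ∈ cs, u < y ∧ P u y) → Ctx P u z →
    R P (u :: (cs ++ z :: rest)) (cs ++ u :: z :: rest)
  | [], u, z, rest, _, _, _ => R.refl _
  | [y], u, z, rest, hch, hall, hc => by
    have h1 := hall y (by simp)
    have h2 : z < y ∧ P z y := (List.isChain_cons_cons.1 hch).1
    simpa using R.seg ([] : List ℕ) rest (tR h1.1 h2.1 h1.2 h2.2 hc)
  | y :: y' :: cs, u, z, rest, hch, hall, hc => by
    have h1 := hall y (by simp)
    have h2 : y' < y ∧ P y' y := (List.isChain_cons_cons.1 hch).1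
    have h3 := hall y' (by simp)
    have m1 : R P (u :: ((y :: y' :: cs) ++ z :: rest)) (y :: u :: y' :: cs ++ z :: rest) := by
      simpa using R.seg ([] : List ℕ) (cs ++ z :: rest)
        (tR h1.1 h2.1 h1.2 h2.2 (Or.inr ⟨h3.1, Or.inl h3.2⟩))
    have m2 : R P (u :: ((y' :: cs) ++ z :: rest)) ((y' :: cs) ++ u :: z :: rest) :=
      crossR (y' :: cs) u z rest (List.isChain_cons_cons.1 hch).2
        (fun w hw => hall w (by simp [hw])) hc
    refine m1.trans ?_
    simpa using m2.lift [y] []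

/-- the big letter `y` crosses leftwards over the block `bs`, right context `z`. -/
lemma crossBig : ∀ (bs : List ℕ) (y z : ℕ) (rest : List ℕ),
    (∀ u ∈ bs, u < y ∧ P u y) → (z < y ∧ P z y) →
    List.Chain' (fun p q => Ctx P p q) (bs ++ [z]) →
    R P (bs ++ y :: z :: rest) (y :: bs ++ z :: rest)
  | [], y, z, rest, _, _, _ => R.refl _
  | b :: bs, y, z, rest, hall, hz, hch => by
    have hb := hall b (by simp)
    have ih : R P (bs ++ y :: z :: rest) (y :: bs ++ z :: rest) :=
      crossBig bs y z rest (fun u hu => hall u (by simp [hu])) hz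
        (List.IsChain.tail (l := (b :: bs) ++ [z]) hch)
    have step1 : R P ((b :: bs) ++ y :: z :: rest) (b :: y :: bs ++ z :: rest) := by
      simpa using ih.lift [b] []
    refine step1.trans ?_
    rcases bs with _ | ⟨b', bs'⟩
    · have hcz : Ctx P b z := (List.isChain_cons_cons.1 hch).1
      simpa using R.seg ([] : List ℕ) rest (tR hb.1 hz.1 hb.2 hz.2 hcz)
    · have hcb' : Ctx P b b' := (List.isChain_cons_cons.1 hch).1
      have hb' := hall b' (by simp)
      simpa using R.seg ([] : List ℕ) (bs' ++ z :: rest) (tR hb.1 hb'.1 hb.2 hb'.2 hcb')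

/-- the small letter `v` crosses leftwards over the block `bs`, left context `w`. -/
lemma crossL : ∀ (bs : List ℕ) (v w : ℕ) (rest : List ℕ),
    (∀ y ∈ bs, v < y ∧ P v y) → (v < w ∧ P v w) →
    List.Chain' (fun p q => Ctx P p q) (w :: bs) →
    R P (w :: bs ++ v :: rest) (w :: v :: bs ++ rest)
  | [], v, w, rest, _, _, _ => R.refl _
  | b :: bs, v, w, rest, hall, hw, hch => by
    have hb := hall b (by simp)
    have ih : R P (b :: bs ++ v :: rest) (b :: v :: bs ++ rest) :=
      crossL bs v b rest (fun y hy => hall y (by simp [hy])) hb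
        (List.isChain_cons_cons.1 hch).2
    have step1 : R P (w :: (b :: bs) ++ v :: rest) (w :: b :: v :: bs ++ rest) := by
      simpa using ih.lift [w] []
    refine step1.trans ?_
    have hcwb : Ctx P w b := (List.isChain_cons_cons.1 hch).1
    simpa using R.seg ([] : List ℕ) (bs ++ rest) (tL hb.1 hw.1 hb.2 hw.2 hcwb)

end St16

namespace St16
variable {P : ℕ → ℕ → Prop}

/-- Step 1: the whole block `as'.reverse` crosses the chain `cs`. Here
`as' = [a_1, …, a_k]` in increasing order. -/
lemma blockCross : ∀ (as' : List ℕ) (z : ℕ) (cs rest : List ℕ),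
    List.Chain' (fun p q => q < p ∧ P q p) cs →
    (∀ x ∈ z :: as', ∀ y ∈ cs, x < y ∧ P x y) →
    List.Chain' (fun p q => Ctx P q p) (z :: as') →
    R P (as'.reverse ++ (cs ++ z :: rest)) (cs ++ (as'.reverse ++ z :: rest))
  | [], z, cs, rest, _, _, _ => R.refl _
  | x :: tl, z, cs, rest, hcs, hall, hctx => by
    have hchz : List.Chain' (fun p q => q < p ∧ P q p) (cs ++ [z]) := by
      refine List.isChain_append.2 ?_
      refine ⟨hcs, List.isChain_singleton _, ?_⟩
      intro p hp q hq
      simp at hq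
      subst hq
      exact hall z (by simp) p (List.mem_of_getLast? hp)
    have hxz : Ctx P x z := (List.isChain_cons_cons.1 hctx).1
    have m1 : R P (x :: (cs ++ z :: rest)) (cs ++ x :: z :: rest) :=
      crossR cs x z rest hchz (fun y hy => hall x (by simp) y hy) hxz
    have m1' : R P (tl.reverse ++ [x] ++ (cs ++ z :: rest))
        (tl.reverse ++ (cs ++ x :: z :: rest)) := by
      simpa using m1.lift tl.reverse []
    have ih : R P (tl.reverse ++ (cs ++ x :: (z :: rest)))
        (cs ++ (tl.reverse ++ x :: (z :: rest))) :=
      blockCross tl x cs (z :: rest) hcs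
        (fun u hu y hy => hall u (by simp only [List.mem_cons] at hu ⊢; tauto) y hy)
        (List.isChain_cons_cons.1 hctx).2
    have m1'' : R P ((x :: tl).reverse ++ (cs ++ z :: rest))
        (tl.reverse ++ (cs ++ x :: (z :: rest))) := by
      rw [List.reverse_cons]
      exact m1'
    have := m1''.trans ih
    simpa [List.reverse_cons, List.append_assoc] using this

/-- Step 3: every element of `vs` (in decreasing chain order) crosses
leftwards over the block `bs`, with initial left context `w`. -/
lemma blockCrossL : ∀ (vs : List ℕ) (w : ℕ) (bs rest : List ℕ),
    (∀ v ∈ vs, ∀ y ∈ bs, v < y ∧ P v y) →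
    List.Chain' (fun p q => q < p ∧ P q p) (w :: vs) →
    List.Chain' (fun p q => Ctx P p q) bs →
    (∀ v ∈ w :: vs, ∀ y ∈ bs.head?, Ctx P v y) →
    R P (w :: (bs ++ (vs ++ rest))) (w :: (vs ++ (bs ++ rest)))
  | [], w, bs, rest, _, _, _, _ => R.refl _
  | v :: vs, w, bs, rest, hvy, hwch, hcb, hhd => by
    have hvw : v < w ∧ P v w := (List.isChain_cons_cons.1 hwch).1
    have hctx : List.Chain' (fun p q => Ctx P p q) (w :: bs) :=
      List.isChain_cons.2 ⟨fun y hy => hhd w (by simp) y hy, hcb⟩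
    have m1 : R P (w :: bs ++ v :: (vs ++ rest)) (w :: v :: bs ++ (vs ++ rest)) :=
      crossL bs v w (vs ++ rest) (fun y hy => hvy v (by simp) y hy) hvw hctx
    have ih : R P (v :: (bs ++ (vs ++ rest))) (v :: (vs ++ (bs ++ rest))) :=
      blockCrossL vs v bs rest (fun u hu y hy => hvy u (by simp [hu]) y hy)
        (List.isChain_cons_cons.1 hwch).2 hcb
        (fun u hu y hy => hhd u (by simp only [List.mem_cons] at hu ⊢; tauto) y hy)
    have m2 : R P (w :: (v :: (bs ++ (vs ++ rest)))) (w :: (v :: (vs ++ (bs ++ rest)))) := by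
      simpa using ih.lift [w] []
    refine R.trans ?_ m2
    simpa [List.append_assoc] using m1

/-- The shape of the word after the "bubble" phase. -/
def out (d : ℕ) (rest : List ℕ) : List ℕ → ℕ → List ℕ
  | [], x => d :: x :: rest
  | b :: bs, x => x :: out d rest bs b

/-- Ladder-word predicate: consecutive letters decrease and are incomparable,
letters at distance two satisfy `P` upward. -/
def LW (P : ℕ → ℕ → Prop) : List ℕ → Prop
  | x :: y :: rest => y < x ∧ Incomp P y x ∧ (∀ z ∈ rest.head?, P z x) ∧ LW P (y :: rest)
  | _ => True

lemma bubble : ∀ (bs : List ℕ) (x y d : ℕ) (rest : List ℕ),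
    LW P (y :: x :: (bs ++ [d])) →
    R P (x :: y :: (bs ++ d :: rest)) (y :: out d rest bs x)
  | [], x, y, d, rest, h => by
    obtain ⟨hxy, hixy, hhd, hd, hid, -⟩ := h
    have hPdy : P d y := hhd d rfl
    simpa [out] using R.seg ([] : List ℕ) rest (t1 hd hxy hPdy hid hixy)
  | b :: bs, x, y, d, rest, h => by
    obtain ⟨hxy, hixy, hhd, hrest⟩ := h
    have hb : b < x := hrest.1
    have hib : Incomp P b x := hrest.2.1
    have hPby : P b y := hhd b rfl
    have m1 : R P (x :: y :: (b :: bs ++ d :: rest)) (y :: b :: x :: (bs ++ d :: rest)) := by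
      simpa using R.seg ([] : List ℕ) (bs ++ d :: rest) (t1 hb hxy hPby hib hixy)
    have ih : R P (b :: x :: (bs ++ d :: rest)) (x :: out d rest bs b) :=
      bubble bs b x d rest hrest
    have m2 : R P (y :: (b :: x :: (bs ++ d :: rest))) (y :: (x :: out d rest bs b)) := by
      simpa using ih.lift [y] []
    exact (m1.trans m2)

end St16

namespace St16
variable {P : ℕ → ℕ → Prop}

/-- `[f (s+k-1), ..., f s]` -/
def rml (f : ℕ → ℕ) (s k : ℕ) : List ℕ := (List.range' s k).reverse.map f

lemma rml_zero (f s) : rml f s 0 = [] := rfl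

lemma rml_succ (f s k) : rml f s (k+1) = f (s+k) :: rml f s k := by
  simp [rml, List.range'_1_concat]

lemma rml_concat (f s k) : rml f s (k+1) = rml f (s+1) k ++ [f s] := by
  simp [rml, List.range'_succ]

lemma rml_add (f : ℕ → ℕ) (s k1 k2 : ℕ) :
    rml f s (k2 + k1) = rml f (s + k1) k2 ++ rml f s k1 := by
  rw [Nat.add_comm k2 k1]
  simp only [rml, ← List.range'_append_1, List.reverse_append, List.map_append]

lemma mem_rml {f s k x} : x ∈ rml f s k ↔ ∃ j, s ≤ j ∧ j < s + k ∧ f j = x := by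
  simp only [rml, List.mem_map, List.mem_reverse, List.mem_range', one_mul]
  constructor
  · rintro ⟨j, ⟨i, hi, rfl⟩, rfl⟩
    exact ⟨s + i, by omega, by omega, rfl⟩
  · rintro ⟨j, h1, h2, rfl⟩
    exact ⟨j, ⟨j - s, by omega, by omega⟩, rfl⟩

lemma head?_rml (f s k) : (rml f s (k+1)).head? = some (f (s+k)) := by
  rw [rml_succ]; rfl

lemma getLast?_rml (f s k) : (rml f s (k+1)).getLast? = some (f s) := by
  rw [rml_concat]; simp

lemma chain'_rml (r : ℕ → ℕ → Prop) (f : ℕ → ℕ) (s : ℕ) :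
    ∀ k, (∀ j, s ≤ j → j + 1 < s + k → r (f (j+1)) (f j)) →
    List.Chain' r (rml f s k)
  | 0, _ => List.isChain_nil
  | 1, _ => List.isChain_singleton _
  | (k+2), h => by
    rw [rml_succ, rml_succ]
    refine List.isChain_cons_cons.2 ⟨h (s+k) (by omega) (by omega), ?_⟩
    rw [← rml_succ]
    exact chain'_rml r f s (k+1) (fun j h1 h2 => h j h1 (by omega))

lemma chain'_range' (q : ℕ → ℕ → Prop) :
    ∀ (k s : ℕ), (∀ j, s ≤ j → j + 1 < s + k → q j (j+1)) →
    List.Chain' q (List.range' s k)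
  | 0, _, _ => List.isChain_nil
  | 1, _, _ => List.isChain_singleton _
  | (k+2), s, h => by
    rw [List.range'_succ, List.range'_succ]
    refine List.isChain_cons_cons.2 ⟨by simpa using h s (le_refl s) (by omega), ?_⟩
    rw [← List.range'_succ]
    exact chain'_range' q (k+1) (s+1) (fun j h1 h2 => h j (by omega) (by omega))

lemma chain'_mr (r : ℕ → ℕ → Prop) (f : ℕ → ℕ) (k s : ℕ)
    (h : ∀ j, s ≤ j → j + 1 < s + k → r (f j) (f (j+1))) :
    List.Chain' r ((List.range' s k).map f) := by
  refine (List.isChain_map f).2 ?_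
  exact chain'_range' _ k s h

lemma out_eq (d : ℕ) (t : List ℕ) (f : ℕ → ℕ) :
    ∀ (k s : ℕ), out d t (rml f s k) (f (s + k)) = rml f (s+1) k ++ d :: f s :: t
  | 0, s => by simp [rml_zero, out]
  | (k+1), s => by
    rw [rml_succ, rml_succ]
    show f (s + (k+1)) :: out d t (rml f s k) (f (s + k)) = _
    rw [out_eq d t f k s]
    simp only [List.cons_append]
    have e : s + 1 + k = s + (k + 1) := by omega
    rw [e]

lemma LW_inst (f : ℕ → ℕ) (d : ℕ) :
    ∀ k, (∀ j, 1 ≤ j → j + 1 ≤ k → f j < f (j+1) ∧ Incomp P (f j) (f (j+1))) →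
    (1 ≤ k → d < f 1 ∧ Incomp P d (f 1)) →
    (∀ j, 1 ≤ j → j + 2 ≤ k → P (f j) (f (j+2))) →
    (2 ≤ k → P d (f 2)) →
    LW P (rml f 1 k ++ [d])
  | 0, _, _, _, _ => trivial
  | 1, _, h2, _, _ => by
    rw [rml_succ, rml_zero]
    obtain ⟨ha, hb⟩ := h2 le_rfl
    exact ⟨ha, hb, by simp, trivial⟩
  | (k+2), h1, h2, h3, h4 => by
    have ih : LW P (rml f 1 (k+1) ++ [d]) :=
      LW_inst f d (k+1) (fun j a b => h1 j a (by omega)) (fun _ => h2 (by omega))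
        (fun j a b => h3 j a (by omega)) (fun h => h4 (by omega))
    rw [rml_succ, rml_succ, List.cons_append, List.cons_append]
    have e1 : (1:ℕ) + (k+1) = k + 2 := by omega
    have e2 : (1:ℕ) + k = k + 1 := by omega
    rw [e1, e2]
    refine ⟨(h1 (k+1) (by omega) (by omega)).1, (h1 (k+1) (by omega) (by omega)).2, ?_, ?_⟩
    · intro z hz
      rcases k with _ | k'
      · simp [rml_zero] at hz
        subst hz
        exact h4 (by omega)
      · rw [rml_succ] at hz
        simp at hz
        subst hz
        have e3 : (1:ℕ) + k' = k' + 1 := by omega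
        rw [e3]
        exact h3 (k'+1) (by omega) (by omega)
    · have := ih
      rw [rml_succ, List.cons_append, e2] at this
      exact this

end St16

theorem St16.main (n l m : ℕ) (P : ℕ → ℕ → Prop) (hP : NUIO n P)
    (c a : ℕ → ℕ) (i : ℕ)
    (hcdom : ∀ j, 1 ≤ j → j ≤ l → c j ∈ Finset.Icc 1 n)
    (hadom : ∀ j, 1 ≤ j → j ≤ m → a j ∈ Finset.Icc 1 n)
    (hcchain : ∀ j, 1 ≤ j → j + 1 ≤ l → P (c j) (c (j + 1)))
    (hi : 1 ≤ i) (hil : i + 1 ≤ l) (hm : 1 ≤ m)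
    (hlow : c i < a 1)
    (hainc : ∀ j, 1 ≤ j → j + 1 ≤ m → a j < a (j + 1))
    (hhigh : a m < c (i + 1))
    (hlad : IsLadderSet P
      (insert (c i) (insert (c (i + 1)) ((Finset.Icc 1 m).image a)))) :
    Relation.EqvGen (KnuthMoveL P)
      (((List.range' 1 m).reverse.map a) ++ ((List.range' 1 l).reverse.map c))
      (((List.range' 1 l).reverse.map c) ++ ((List.range' 1 m).reverse.map a)) := by
  obtain ⟨hirr, htrans, hlt, haxiom⟩ := hP
  set S := insert (c i) (insert (c (i + 1)) ((Finset.Icc 1 m).image a)) with hS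
  have haS : ∀ j, 1 ≤ j → j ≤ m → a j ∈ S := fun j h1 h2 => by
    simp only [hS, Finset.mem_insert, Finset.mem_image]
    exact Or.inr (Or.inr ⟨j, Finset.mem_Icc.2 ⟨h1, h2⟩, rfl⟩)
  have hdS : c i ∈ S := Finset.mem_insert_self _ _
  have hqS : c (i+1) ∈ S := Finset.mem_insert_of_mem (Finset.mem_insert_self _ _)
  have amono : ∀ j k, 1 ≤ j → j < k → k ≤ m → a j < a k := by
    intro j k h1 h2 h3
    induction k with
    | zero => omega
    | succ k ih =>
      rcases Nat.lt_or_ge j k with h | h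
      · exact lt_trans (ih h (by omega)) (hainc k (by omega) (by omega))
      · have : j = k := by omega
        subst this
        exact hainc j h1 h3
  have amono' : ∀ j k, 1 ≤ j → j ≤ k → k ≤ m → a j ≤ a k := by
    intro j k h1 h2 h3
    rcases Nat.lt_or_ge j k with h | h
    · exact le_of_lt (amono j k h1 h h3)
    · have : j = k := by omega
      subst this; exact le_rfl
  have Fcc : ∀ j k, 1 ≤ j → j < k → k ≤ l → P (c j) (c k) := by
    intro j k h1 h2 h3
    induction k with
    | zero => omega
    | succ k ih =>
      rcases Nat.lt_or_ge j k with h | h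
      · exact htrans _ _ _ (ih h (by omega)) (hcchain k (by omega) (by omega))
      · have : j = k := by omega
        subst this
        exact hcchain j h1 h3
  have hd_lt_aj : ∀ j, 1 ≤ j → j ≤ m → c i < a j :=
    fun j h1 h2 => lt_of_lt_of_le hlow (amono' 1 j le_rfl h1 h2)
  have haj_lt_q : ∀ j, 1 ≤ j → j ≤ m → a j < c (i+1) :=
    fun j h1 h2 => lt_of_le_of_lt (amono' j m h1 h2 le_rfl) hhigh
  -- elements of S
  have hSmem : ∀ z ∈ S, z = c i ∨ z = c (i+1) ∨ ∃ r, 1 ≤ r ∧ r ≤ m ∧ z = a r := by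
    intro z hz
    simp only [hS, Finset.mem_insert, Finset.mem_image] at hz
    rcases hz with h | h | ⟨r, hr, rfl⟩
    · exact Or.inl h
    · exact Or.inr (Or.inl h)
    · exact Or.inr (Or.inr ⟨r, (Finset.mem_Icc.1 hr).1, (Finset.mem_Icc.1 hr).2, rfl⟩)
  have Finc : ∀ j, 1 ≤ j → j + 1 ≤ m → Incomp P (a j) (a (j+1)) := by
    intro j h1 h2
    refine (hlad (a j) (haS j h1 (by omega)) (a (j+1)) (haS (j+1) (by omega) h2)
      (hainc j h1 h2)).1 ?_
    intro z hz ⟨hz1, hz2⟩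
    rcases hSmem z hz with rfl | rfl | ⟨r, hr1, hr2, rfl⟩
    · exact absurd (lt_trans (hd_lt_aj j h1 (by omega)) hz1) (by omega)
    · exact absurd (lt_trans hz2 (haj_lt_q (j+1) (by omega) h2)) (lt_irrefl _)
    · rcases Nat.lt_or_ge r (j+1) with h | h
      · exact absurd (lt_of_le_of_lt (amono' r j hr1 (by omega) (by omega)) hz1)
          (lt_irrefl _)
      · exact absurd (lt_of_le_of_lt (amono' (j+1) r (by omega) h hr2) hz2)
          (lt_irrefl _)
  have FincLow : Incomp P (c i) (a 1) := by
    refine (hlad (c i) hdS (a 1) (haS 1 le_rfl hm) hlow).1 ?_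
    intro z hz ⟨hz1, hz2⟩
    rcases hSmem z hz with rfl | rfl | ⟨r, hr1, hr2, rfl⟩
    · exact absurd hz1 (lt_irrefl _)
    · exact absurd (lt_trans hz2 (haj_lt_q 1 le_rfl hm)) (lt_irrefl _)
    · exact absurd (lt_of_le_of_lt (amono' 1 r le_rfl hr1 hr2) hz2) (lt_irrefl _)
  have FincHigh : Incomp P (a m) (c (i+1)) := by
    refine (hlad (a m) (haS m hm le_rfl) (c (i+1)) hqS hhigh).1 ?_
    intro z hz ⟨hz1, hz2⟩
    rcases hSmem z hz with rfl | rfl | ⟨r, hr1, hr2, rfl⟩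
    · exact absurd (lt_trans (hd_lt_aj m hm le_rfl) hz1) (lt_irrefl _)
    · exact absurd hz2 (lt_irrefl _)
    · exact absurd (lt_of_lt_of_le hz1 (amono' r m hr1 hr2 le_rfl)) (lt_irrefl _)
  have Faa : ∀ j k, 1 ≤ j → j + 2 ≤ k → k ≤ m → P (a j) (a k) := by
    intro j k h1 h2 h3
    refine (hlad (a j) (haS j h1 (by omega)) (a k) (haS k (by omega) h3)
      (amono j k h1 (by omega) h3)).2 ⟨a (j+1), haS (j+1) (by omega) (by omega),
      hainc j h1 (by omega), amono (j+1) k (by omega) (by omega) h3⟩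
  have Fda : ∀ j, 2 ≤ j → j ≤ m → P (c i) (a j) := by
    intro j h1 h2
    refine (hlad (c i) hdS (a j) (haS j (by omega) h2) (hd_lt_aj j (by omega) h2)).2
      ⟨a 1, haS 1 le_rfl hm, hlow, amono 1 j le_rfl (by omega) h2⟩
  have Faq : ∀ j, 1 ≤ j → j + 1 ≤ m → P (a j) (c (i+1)) := by
    intro j h1 h2
    refine (hlad (a j) (haS j h1 (by omega)) (c (i+1)) hqS (haj_lt_q j h1 (by omega))).2
      ⟨a m, haS m hm le_rfl, amono j m h1 (by omega) le_rfl, hhigh⟩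
  have Fdq : P (c i) (c (i+1)) := hcchain i hi hil
  have Fca1 : ∀ k, 1 ≤ k → k < i → P (c k) (a 1) := by
    intro k h1 h2
    by_contra hnot
    have hki : P (c k) (c i) := Fcc k i h1 h2 (by omega)
    have hlt1 : c k < c i := hlt _ _ hki
    have hinc1 : Incomp P (a 1) (c k) := by
      refine ⟨fun e => by omega, fun h => ?_, hnot⟩
      exact absurd (lt_trans (hlt _ _ h) (lt_trans hlt1 hlow)) (lt_irrefl _)
    have hinc2 : Incomp P (a 1) (c i) :=
      ⟨fun e => by have := FincLow.1; omega, FincLow.2.2, FincLow.2.1⟩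
    have := haxiom (a 1) (c k) (c i) (hadom 1 le_rfl hm) (hcdom k h1 (by omega))
      (hcdom i hi (by omega)) hlt1 hki hinc1 hinc2
    omega
  have Fca : ∀ k j, 1 ≤ k → k < i → 1 ≤ j → j ≤ m → P (c k) (a j) := by
    intro k j h1 h2 h3 h4
    rcases Nat.lt_or_ge j 2 with h | h
    · have : j = 1 := by omega
      subst this; exact Fca1 k h1 h2
    · exact htrans _ _ _ (Fcc k i h1 h2 (by omega)) (Fda j h h4)
  have Facm : i + 2 ≤ l → P (a m) (c (i+2)) := by
    intro hl2
    by_contra hnot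
    have hq2 : P (c (i+1)) (c (i+2)) := hcchain (i+1) (by omega) hl2
    have hlt2 : c (i+1) < c (i+2) := hlt _ _ hq2
    have hinc2 : Incomp P (a m) (c (i+2)) := by
      refine ⟨fun e => by omega, hnot, fun h => ?_⟩
      exact absurd (lt_trans (hlt _ _ h) hhigh) (by omega)
    have := haxiom (a m) (c (i+1)) (c (i+2)) (hadom m hm le_rfl)
      (hcdom (i+1) (by omega) (by omega)) (hcdom (i+2) (by omega) hl2)
      hlt2 hq2 FincHigh hinc2
    omega
  have Fac : ∀ k j, i + 2 ≤ k → k ≤ l → 1 ≤ j → j ≤ m → P (a j) (c k) := by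
    intro k j h1 h2 h3 h4
    rcases Nat.lt_or_ge j m with h | h
    · refine htrans _ _ _ (Faq j h3 h) ?_
      exact Fcc (i+1) k (by omega) (by omega) h2
    · have : j = m := by omega
      subst this
      rcases Nat.lt_or_ge (i+2) k with h' | h'
      · exact htrans _ _ _ (Facm (by omega)) (Fcc (i+2) k (by omega) h' h2)
      · have : k = i + 2 := by omega
        subst this
        exact Facm h2
  have isymm : ∀ {x y : ℕ}, Incomp P x y → Incomp P y x :=
    fun h => ⟨fun e => h.1 e.symm, h.2.2, h.2.1⟩
  obtain ⟨t, ht⟩ : ∃ t, l = i + 1 + t := ⟨l - (i+1), by omega⟩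
  obtain ⟨e, he⟩ : ∃ e, i = e + 1 := ⟨i - 1, by omega⟩
  obtain ⟨m0, hm0⟩ : ∃ m0, m = m0 + 1 := ⟨m - 1, by omega⟩
  -- decomposition of the c-word
  have E1 : rml c 1 l = rml c (i+2) t ++ c (i+1) :: c i :: rml c 1 e := by
    have h1 : l = t + (e + 2) := by omega
    rw [h1, rml_add]
    rw [show e + 2 = (e+1) + 1 from rfl, rml_succ, rml_succ]
    rw [show 1 + (e+2) = i + 2 by omega, show 1 + (e+1) = i + 1 by omega,
      show 1 + e = i by omega]
  -- membership helpers
  have memChi : ∀ y ∈ rml c (i+2) t, ∃ kk, i+2 ≤ kk ∧ kk ≤ l ∧ y = c kk := by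
    intro y hy
    obtain ⟨j, h1, h2, rfl⟩ := mem_rml.1 hy
    exact ⟨j, h1, by omega, rfl⟩
  have memClo : ∀ y ∈ rml c 1 e, ∃ kk, 1 ≤ kk ∧ kk < i ∧ y = c kk := by
    intro y hy
    obtain ⟨j, h1, h2, rfl⟩ := mem_rml.1 hy
    exact ⟨j, h1, by omega, rfl⟩
  have memrmla : ∀ s k, ∀ y ∈ rml a s k, ∃ j, s ≤ j ∧ j < s + k ∧ y = a j := by
    intro s k y hy
    obtain ⟨j, h1, h2, rfl⟩ := mem_rml.1 hy
    exact ⟨j, h1, h2, rfl⟩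
  -- Step 1
  have hChainChi : List.Chain' (fun p q => q < p ∧ P q p) (rml c (i+2) t) :=
    chain'_rml _ c (i+2) t (fun j h1 h2 =>
      ⟨hlt _ _ (hcchain j (by omega) (by omega)), hcchain j (by omega) (by omega)⟩)
  have R1 : R P (rml a 1 m ++ (rml c (i+2) t ++ c (i+1) :: c i :: rml c 1 e))
      (rml c (i+2) t ++ (rml a 1 m ++ c (i+1) :: c i :: rml c 1 e)) := by
    have hrev : ((List.range' 1 m).map a).reverse = rml a 1 m := by
      simp [rml, List.map_reverse]
    have hall : ∀ x ∈ c (i+1) :: (List.range' 1 m).map a, ∀ y ∈ rml c (i+2) t,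
        x < y ∧ P x y := by
      intro x hx y hy
      obtain ⟨kk, hk1, hk2, rfl⟩ := memChi y hy
      rcases List.mem_cons.1 hx with rfl | hx
      · exact ⟨hlt _ _ (Fcc (i+1) kk (by omega) (by omega) hk2),
          Fcc (i+1) kk (by omega) (by omega) hk2⟩
      · obtain ⟨j, hj, rfl⟩ := List.mem_map.1 hx
        obtain ⟨r, hr, rfl⟩ := List.mem_range'.1 hj
        have h1 : 1 ≤ 1 + 1*r := by omega
        have h2 : 1 + 1*r ≤ m := by omega
        exact ⟨hlt _ _ (Fac kk _ hk1 hk2 h1 h2), Fac kk _ hk1 hk2 h1 h2⟩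
    have hctx : List.Chain' (fun p q => Ctx P q p) (c (i+1) :: (List.range' 1 m).map a) := by
      refine List.isChain_cons.2 ⟨?_, ?_⟩
      · intro y hy
        rw [hm0, List.range'_succ] at hy
        simp only [List.map_cons, List.head?_cons, Option.mem_some_iff] at hy
        subst hy
        refine Or.inr ⟨haj_lt_q 1 le_rfl hm, ?_⟩
        rcases Nat.lt_or_ge 1 m with h | h
        · exact Or.inl (Faq 1 le_rfl h)
        · have hm1 : m = 1 := by omega
          have hf := FincHigh
          rw [hm1] at hf
          exact Or.inr hf
      · refine chain'_mr _ a m 1 (fun j h1 h2 => ?_)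
        exact Or.inl ⟨hainc j h1 (by omega), Finc j h1 (by omega)⟩
    have hb := blockCross ((List.range' 1 m).map a) (c (i+1)) (rml c (i+2) t)
      (c i :: rml c 1 e) hChainChi hall hctx
    rw [hrev] at hb
    exact hb
  -- Step 3
  have R3core : R P (c i :: (rml a 1 m ++ (rml c 1 e ++ [])))
      (c i :: (rml c 1 e ++ (rml a 1 m ++ []))) := by
    refine blockCrossL (rml c 1 e) (c i) (rml a 1 m) [] ?_ ?_ ?_ ?_
    · intro v hv y hy
      obtain ⟨kk, h1, h2, rfl⟩ := memClo v hv
      obtain ⟨j, hj1, hj2, rfl⟩ := memrmla 1 m y hy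
      exact ⟨hlt _ _ (Fca kk j h1 h2 hj1 (by omega)), Fca kk j h1 h2 hj1 (by omega)⟩
    · have : c i :: rml c 1 e = rml c 1 (e+1) := by
        rw [rml_succ, show 1 + e = i by omega]
      rw [this]
      exact chain'_rml _ c 1 (e+1) (fun j h1 h2 =>
        ⟨hlt _ _ (hcchain j h1 (by omega)), hcchain j h1 (by omega)⟩)
    · exact chain'_rml _ a 1 m (fun j h1 h2 =>
        Or.inl ⟨hainc j h1 (by omega), Finc j h1 (by omega)⟩)
    · intro v hv y hy
      rw [hm0, head?_rml] at hy
      simp only [Option.mem_some_iff] at hy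
      subst hy
      have hym : a (1 + m0) = a m := by rw [hm0, Nat.add_comm]
      rcases List.mem_cons.1 hv with rfl | hv
      · refine Or.inr ⟨by rw [hym]; exact hd_lt_aj m hm le_rfl, ?_⟩
        rcases Nat.lt_or_ge 1 m with h | h
        · exact Or.inl (by rw [hym]; exact Fda m (by omega) le_rfl)
        · have hm1 : m = 1 := by omega
          refine Or.inr (by rw [hym, hm1]; exact FincLow)
      · obtain ⟨kk, h1, h2, rfl⟩ := memClo v hv
        exact Or.inr ⟨by rw [hym]; exact hlt _ _ (Fca kk m h1 h2 hm le_rfl),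
          Or.inl (by rw [hym]; exact Fca kk m h1 h2 hm le_rfl)⟩
  -- Step 2
  have R2 : R P (rml c (i+2) t ++ (rml a 1 m ++ c (i+1) :: c i :: rml c 1 e))
      (rml c (i+2) t ++ (c (i+1) :: c i :: (rml a 1 m ++ rml c 1 e))) := by
    rcases Nat.eq_zero_or_pos m0 with hm00 | hm00
    · -- m = 1
      have hm1 : m = 1 := by omega
      have hA1 : rml a 1 m = [a 1] := by rw [hm1, rml_succ, rml_zero]
      have hf := FincHigh
      rw [hm1] at hf
      have tr : KnuthTriple P (a 1, c (i+1), c i) (c (i+1), c i, a 1) :=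
        t1 hlow (haj_lt_q 1 le_rfl hm) Fdq FincLow hf
      have := R.seg (rml c (i+2) t) (rml c 1 e) tr
      rw [hA1]
      simpa using this
    · -- m = k + 2
      obtain ⟨k, hk⟩ : ∃ k, m = k + 2 := ⟨m0 - 1, by omega⟩
      have hAk : rml a 1 m = a (k+2) :: a (k+1) :: rml a 1 k := by
        rw [hk, rml_succ, rml_succ, show 1 + (k+1) = k + 2 by omega,
          show 1 + k = k + 1 by omega]
      have hB' : rml a 1 (k+1) = a (k+1) :: rml a 1 k := by
        rw [rml_succ, show 1 + k = k + 1 by omega]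
      have hmk2 : a m = a (k+2) := by rw [hk]
      -- phase A
      have hPA : R P (rml a 1 (k+1) ++ c (i+1) :: c i :: rml c 1 e)
          (c (i+1) :: rml a 1 (k+1) ++ c i :: rml c 1 e) := by
        refine crossBig _ (c (i+1)) (c i) (rml c 1 e) ?_ ⟨hlt _ _ Fdq, Fdq⟩ ?_
        · intro u hu
          obtain ⟨j, h1, h2, rfl⟩ := memrmla 1 (k+1) u hu
          exact ⟨haj_lt_q j h1 (by omega), Faq j h1 (by omega)⟩
        · refine List.isChain_append.2 ⟨?_, List.isChain_singleton _, ?_⟩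
          · exact chain'_rml _ a 1 (k+1) (fun j h1 h2 =>
              Or.inl ⟨hainc j h1 (by omega), Finc j h1 (by omega)⟩)
          · intro x hx y hy
            rw [getLast?_rml] at hx
            simp only [Option.mem_some_iff] at hx
            subst hx
            simp only [List.head?_cons, Option.mem_some_iff] at hy
            subst hy
            exact Or.inl ⟨hlow, FincLow⟩
      have R2a : R P (rml c (i+2) t ++ (rml a 1 m ++ c (i+1) :: c i :: rml c 1 e))
          ((rml c (i+2) t) ++ a (k+2) :: c (i+1) :: a (k+1) :: (rml a 1 k ++ c i :: rml c 1 e)) := by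
        have := hPA.lift (rml c (i+2) t ++ [a (k+2)]) []
        rw [hAk]
        simpa [hB', List.append_assoc] using this
      -- jump
      have tr2 : KnuthTriple P (a (k+2), c (i+1), a (k+1)) (c (i+1), a (k+1), a (k+2)) :=
        t1 (hainc (k+1) (by omega) (by omega)) (by rw [← hmk2]; exact hhigh)
          (Faq (k+1) (by omega) (by omega)) (Finc (k+1) (by omega) (by omega))
          (by rw [← hmk2]; exact FincHigh)
      have R2b : R P ((rml c (i+2) t) ++ a (k+2) :: c (i+1) :: a (k+1) :: (rml a 1 k ++ c i :: rml c 1 e))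
          ((rml c (i+2) t) ++ c (i+1) :: a (k+1) :: a (k+2) :: (rml a 1 k ++ c i :: rml c 1 e)) :=
        R.seg (rml c (i+2) t) (rml a 1 k ++ c i :: rml c 1 e) tr2
      -- bubble
      have hLW : LW P (a (k+2) :: a (k+1) :: (rml a 1 k ++ [c i])) := by
        have := LW_inst (P := P) a (c i) (k+2)
          (fun j h1 h2 => ⟨hainc j h1 (by omega), Finc j h1 (by omega)⟩)
          (fun _ => ⟨hlow, FincLow⟩)
          (fun j h1 h2 => Faa j (j+2) h1 le_rfl (by omega))
          (fun _ => Fda 2 le_rfl (by omega))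
        rw [rml_succ, rml_succ, show 1 + (k+1) = k + 2 by omega,
          show 1 + k = k + 1 by omega] at this
        simpa using this
      have hbub := bubble (rml a 1 k) (a (k+1)) (a (k+2)) (c i) (rml c 1 e) hLW
      have houteq : out (c i) (rml c 1 e) (rml a 1 k) (a (k+1))
          = rml a 2 k ++ c i :: a 1 :: rml c 1 e := by
        have := out_eq (c i) (rml c 1 e) a k 1
        rw [show 1 + k = k + 1 by omega] at this
        exact this
      have R2c : R P ((rml c (i+2) t) ++ c (i+1) :: a (k+1) :: a (k+2) :: (rml a 1 k ++ c i :: rml c 1 e))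
          ((rml c (i+2) t) ++ c (i+1) :: a (k+2) :: (rml a 2 k ++ c i :: a 1 :: rml c 1 e)) := by
        have := hbub.lift (rml c (i+2) t ++ [c (i+1)]) []
        rw [houteq] at this
        simpa [List.append_assoc] using this
      -- phase C
      have hCL : R P (c (i+1) :: rml a 2 (k+1) ++ c i :: (a 1 :: rml c 1 e))
          (c (i+1) :: c i :: rml a 2 (k+1) ++ (a 1 :: rml c 1 e)) := by
        refine crossL _ (c i) (c (i+1)) (a 1 :: rml c 1 e) ?_ ⟨hlt _ _ Fdq, Fdq⟩ ?_
        · intro y hy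
          obtain ⟨j, h1, h2, rfl⟩ := memrmla 2 (k+1) y hy
          exact ⟨hd_lt_aj j (by omega) (by omega), Fda j h1 (by omega)⟩
        · refine List.isChain_cons.2 ⟨?_, ?_⟩
          · intro y hy
            rw [head?_rml] at hy
            simp only [Option.mem_some_iff] at hy
            subst hy
            have h2k : a (2+k) = a m := by rw [hk, Nat.add_comm]
            exact Or.inl ⟨by rw [h2k]; exact hhigh, by rw [h2k]; exact FincHigh⟩
          · exact chain'_rml _ a 2 (k+1) (fun j h1 h2 =>
              Or.inl ⟨hainc j (by omega) (by omega), Finc j (by omega) (by omega)⟩)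
      have hsplitA : rml a 1 m = rml a 2 (k+1) ++ [a 1] := by
        rw [hk]
        exact rml_concat a 1 (k+1)
      have R2d : R P ((rml c (i+2) t) ++ c (i+1) :: a (k+2) :: (rml a 2 k ++ c i :: a 1 :: rml c 1 e))
          ((rml c (i+2) t) ++ c (i+1) :: c i :: (rml a 1 m ++ rml c 1 e)) := by
        have := hCL.lift (rml c (i+2) t) []
        have hB2 : rml a 2 (k+1) = a (2+k) :: rml a 2 k := rml_succ a 2 k
        have h2k : a (2+k) = a (k+2) := by rw [Nat.add_comm]
        rw [hB2, h2k] at this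
        rw [hsplitA, hB2, h2k]
        simpa [List.append_assoc] using this
      exact R2a.trans (R2b.trans (R2c.trans R2d))
  -- assemble
  show R P (rml a 1 m ++ rml c 1 l) (rml c 1 l ++ rml a 1 m)
  rw [E1]
  refine R1.trans (R2.trans ?_)
  have := R3core.lift (rml c (i+2) t ++ [c (i+1)]) []
  simpa [List.append_assoc] using this

/-- If c_1 ≺_P ⋯ ≺_P c_l, c_i < a_1 < ⋯ < a_m < c_{i+1}, and
{c_i, a_1, …, a_m, c_{i+1}} is a ladder in P, then the words a_m ⋯ a_1 c_l ⋯ c_1 and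
c_l ⋯ c_1 a_m ⋯ a_1 are P-Knuth equivalent. -/
theorem stmt16 (n l m : ℕ) (P : ℕ → ℕ → Prop) (hP : NUIO n P)
    (c a : ℕ → ℕ) (i : ℕ)
    (hcdom : ∀ j, 1 ≤ j → j ≤ l → c j ∈ Finset.Icc 1 n)
    (hadom : ∀ j, 1 ≤ j → j ≤ m → a j ∈ Finset.Icc 1 n)
    (hcchain : ∀ j, 1 ≤ j → j + 1 ≤ l → P (c j) (c (j + 1)))
    (hi : 1 ≤ i) (hil : i + 1 ≤ l) (hm : 1 ≤ m)
    (hlow : c i < a 1)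
    (hainc : ∀ j, 1 ≤ j → j + 1 ≤ m → a j < a (j + 1))
    (hhigh : a m < c (i + 1))
    (hlad : IsLadderSet P
      (insert (c i) (insert (c (i + 1)) ((Finset.Icc 1 m).image a)))) :
    Relation.EqvGen (KnuthMoveL P)
      (((List.range' 1 m).reverse.map a) ++ ((List.range' 1 l).reverse.map c))
      (((List.range' 1 l).reverse.map c) ++ ((List.range' 1 m).reverse.map a)) :=
  St16.main n l m P hP c a i hcdom hadom hcchain hi hil hm hlow hainc hhigh hlad
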